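/- Let A = ⊕_{n≥0} A_n be a graded bialgebra over a field and σ : A ⊗ A → k a normalized multiplicative 2-cocycle with σ|_{A₀⊗A₀} = ε ⊗ ε. Write σ = Σ_{i≥0} σ_i with σ_i the restriction of σ to the homogeneous component (A⊗A)_i = ⊕_{p+q=i} A_p ⊗ A_q (so σ₀ = ε⊗ε), and let s be the least positive integer with σ_s ≠ 0. Then σ_s is a Hochschild 2-cocycle with trivial coefficients: ε ⊗ σ_s + σ_s(id ⊗ m) = σ_s ⊗ ε + σ_s(m ⊗ id). -/

import Mathlib

open TensorProduct
universe u

/-- The convolution product of two linear maps from a coalgebra `C` to an algebra `A`. -/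
noncomputable def convProd (K : Type u) [CommRing K] {C A : Type u}
    [AddCommMonoid C] [Module K C] [Coalgebra K C] [Ring A] [Algebra K A]
    (φ ψ : C →ₗ[K] A) : C →ₗ[K] A :=
  LinearMap.mul' K A ∘ₗ TensorProduct.map φ ψ ∘ₗ Coalgebra.comul

section Aux

variable {K A : Type u} [CommRing K] [AddCommGroup A] [Module K A] [Coalgebra K A]

noncomputable def Ecl : (A ⊗[K] A) →ₗ[K] A :=
  (TensorProduct.lid K A).toLinearMap ∘ₗ LinearMap.rTensor A (Coalgebra.counit (R := K))

noncomputable def Ecr : (A ⊗[K] A) →ₗ[K] A :=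
  (TensorProduct.rid K A).toLinearMap ∘ₗ LinearMap.lTensor A (Coalgebra.counit (R := K))

@[simp] lemma Ecl_tmul (x y : A) :
    Ecl (K := K) (x ⊗ₜ[K] y) = Coalgebra.counit (R := K) x • y := by simp [Ecl]

@[simp] lemma Ecr_tmul (x y : A) :
    Ecr (K := K) (x ⊗ₜ[K] y) = Coalgebra.counit (R := K) y • x := by simp [Ecr]

@[simp] lemma Ecl_comul (a : A) :
    Ecl (K := K) (Coalgebra.comul (R := K) a) = a := by
  simp [Ecl, Coalgebra.rTensor_counit_comul]

@[simp] lemma Ecr_comul (a : A) :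
    Ecr (K := K) (Coalgebra.comul (R := K) a) = a := by
  simp [Ecr, Coalgebra.lTensor_counit_comul]

end Aux

theorem finsetSum_submodule_le {R M ι : Type*} [Semiring R] [AddCommMonoid M] [Module R M]
    (s : Finset ι) (p : ι → Submodule R M) (T : Submodule R M) (h : ∀ i ∈ s, p i ≤ T) :
    (∑ i ∈ s, p i) ≤ T := by
  classical
  induction s using Finset.induction_on with
  | empty => simp
  | @insert a s ha ih =>
    rw [Finset.sum_insert ha, Submodule.add_eq_sup]
    exact sup_le (h _ (Finset.mem_insert_self _ _))
      (ih fun i hi => h i (Finset.mem_insert_of_mem hi))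

theorem mem_pieces_pred {K A : Type u} [CommRing K] [AddCommGroup A] [Module K A]
    (𝒜 : ℕ → Submodule K A) (n : ℕ) (x : A ⊗[K] A)
    (hx : x ∈ ∑ p ∈ Finset.range (n + 1),
      LinearMap.range (TensorProduct.mapIncl (𝒜 p) (𝒜 (n - p))))
    (P : (A ⊗[K] A) → Prop)
    (h0 : P 0) (hadd : ∀ u v, P u → P v → P (u + v)) (hsmul : ∀ (c : K) u, P u → P (c • u))
    (hpure : ∀ p, p ≤ n → ∀ y ∈ 𝒜 p, ∀ z ∈ 𝒜 (n - p), P (y ⊗ₜ[K] z)) : P x := by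
  let T : Submodule K (A ⊗[K] A) :=
    { carrier := setOf P
      add_mem' := fun h1 h2 => hadd _ _ h1 h2
      zero_mem' := h0
      smul_mem' := fun c u h => hsmul c u h }
  suffices hx : x ∈ T from hx
  refine finsetSum_submodule_le _ _ T (fun i hi => ?_) hx
  rintro _ ⟨w, rfl⟩
  induction w using TensorProduct.induction_on with
  | zero => simp only [map_zero]; exact T.zero_mem
  | tmul y z =>
    exact hpure i (Nat.lt_succ_iff.mp (Finset.mem_range.mp hi)) y y.2 z z.2
  | add u v hu hv => rw [map_add]; exact T.add_mem hu hv

theorem term_left {K A : Type u} [Field K] [Ring A] [Bialgebra K A] (𝒜 : ℕ → Submodule K A)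
    [GradedAlgebra 𝒜]
    (hcounit : ∀ n > 0, ∀ x ∈ 𝒜 n, Coalgebra.counit (R := K) x = 0)
    (σ : (A ⊗[K] A) →ₗ[K] K)
    (hσ0 : ∀ x ∈ 𝒜 0, ∀ y ∈ 𝒜 0,
      σ (x ⊗ₜ[K] y) = Coalgebra.counit (R := K) x * Coalgebra.counit (R := K) y)
    (σi : ℕ → ((A ⊗[K] A) →ₗ[K] K))
    (hσi : ∀ i p q : ℕ, ∀ x ∈ 𝒜 p, ∀ y ∈ 𝒜 q,
      σi i (x ⊗ₜ[K] y) = if p + q = i then σ (x ⊗ₜ[K] y) else 0)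
    (s : ℕ) (hs : 0 < s) (hmin : ∀ i, 0 < i → i < s → σi i = 0)
    (p q r : ℕ) (hpqr : p + q + r = s)
    (da db dc : ℕ) (hda : da ≤ p) (hdb : db ≤ q) (hdc : dc ≤ r)
    (a1 : A) (ha1 : a1 ∈ 𝒜 da) (a2 : A) (ha2 : a2 ∈ 𝒜 (p - da))
    (b1 : A) (hb1 : b1 ∈ 𝒜 db) (b2 : A) (hb2 : b2 ∈ 𝒜 (q - db))
    (c1 : A) (hc1 : c1 ∈ 𝒜 dc) (c2 : A) (hc2 : c2 ∈ 𝒜 (r - dc)) :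
    Coalgebra.counit (R := K) a1 * σ (b1 ⊗ₜ[K] c1) * σ (a2 ⊗ₜ[K] (b2 * c2))
      = Coalgebra.counit (R := K) a1 * Coalgebra.counit (R := K) b1 *
          Coalgebra.counit (R := K) c1 * σ (a2 ⊗ₜ[K] (b2 * c2))
        + Coalgebra.counit (R := K) a1 * Coalgebra.counit (R := K) a2 *
            (Coalgebra.counit (R := K) b2 * Coalgebra.counit (R := K) c2 *
              σi s (b1 ⊗ₜ[K] c1)) := by
  rcases Nat.eq_zero_or_pos da with hda0 | hda0
  swap
  · rw [hcounit da hda0 a1 ha1]; ring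
  subst hda0
  rcases Nat.lt_trichotomy (db + dc) s with he | he | he
  · rcases Nat.eq_zero_or_pos (db + dc) with he0 | he0
    · obtain ⟨hdb0, hdc0⟩ := Nat.add_eq_zero.mp he0
      subst hdb0; subst hdc0
      rw [hσ0 b1 hb1 c1 hc1]
      have h2 : σi s (b1 ⊗ₜ[K] c1) = 0 := by
        rw [hσi s 0 0 b1 hb1 c1 hc1, if_neg (by omega)]
      rw [h2]; ring
    · have hbc : σ (b1 ⊗ₜ[K] c1) = 0 := by
        have h1 := hσi (db + dc) db dc b1 hb1 c1 hc1
        rw [if_pos rfl, hmin (db + dc) he0 he] at h1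
        simpa using h1.symm
      have hbs : σi s (b1 ⊗ₜ[K] c1) = 0 := by
        rw [hσi s db dc b1 hb1 c1 hc1, if_neg (by omega)]
      have hεbc : Coalgebra.counit (R := K) b1 * Coalgebra.counit (R := K) c1 = 0 := by
        rcases Nat.lt_or_ge 0 db with h' | h'
        · rw [hcounit db h' b1 hb1]; ring
        · have hdc0 : 0 < dc := by omega
          rw [hcounit dc hdc0 c1 hc1]; ring
      linear_combination (Coalgebra.counit (R := K) a1 * σ (a2 ⊗ₜ[K] (b2 * c2))) * hbc
        - (Coalgebra.counit (R := K) a1 * σ (a2 ⊗ₜ[K] (b2 * c2))) * hεbc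
        - (Coalgebra.counit (R := K) a1 * Coalgebra.counit (R := K) a2 *
            Coalgebra.counit (R := K) b2 * Coalgebra.counit (R := K) c2) * hbs
  · -- db + dc = s: forces p = 0, db = q, dc = r
    have hp0 : p = 0 := by omega
    have hdbq : db = q := by omega
    have hdcr : dc = r := by omega
    have ha2' : a2 ∈ 𝒜 0 := by simpa [hp0] using ha2
    have hb2' : b2 ∈ 𝒜 0 := by simpa [hdbq] using hb2
    have hc2' : c2 ∈ 𝒜 0 := by simpa [hdcr] using hc2
    have hbc2 : b2 * c2 ∈ 𝒜 0 := by
      simpa using SetLike.mul_mem_graded hb2' hc2'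
    have h1 : σ (a2 ⊗ₜ[K] (b2 * c2)) =
        Coalgebra.counit (R := K) a2 *
          (Coalgebra.counit (R := K) b2 * Coalgebra.counit (R := K) c2) := by
      rw [hσ0 a2 ha2' (b2 * c2) hbc2, Bialgebra.counit_mul]
    have h2 : σi s (b1 ⊗ₜ[K] c1) = σ (b1 ⊗ₜ[K] c1) := by
      rw [hσi s db dc b1 hb1 c1 hc1, if_pos (by omega)]
    have hεbc : Coalgebra.counit (R := K) b1 * Coalgebra.counit (R := K) c1 = 0 := by
      rcases Nat.lt_or_ge 0 q with h' | h'
      · rw [hcounit q h' b1 (hdbq ▸ hb1)]; ring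
      · have hr0 : 0 < r := by omega
        rw [hcounit r hr0 c1 (hdcr ▸ hc1)]; ring
    linear_combination (Coalgebra.counit (R := K) a1 * σ (b1 ⊗ₜ[K] c1)) * h1
      - (Coalgebra.counit (R := K) a1 * Coalgebra.counit (R := K) a2 *
          Coalgebra.counit (R := K) b2 * Coalgebra.counit (R := K) c2) * h2
      - (Coalgebra.counit (R := K) a1 * σ (a2 ⊗ₜ[K] (b2 * c2))) * hεbc
  · exfalso; omega

theorem term_right {K A : Type u} [Field K] [Ring A] [Bialgebra K A] (𝒜 : ℕ → Submodule K A)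
    [GradedAlgebra 𝒜]
    (hcounit : ∀ n > 0, ∀ x ∈ 𝒜 n, Coalgebra.counit (R := K) x = 0)
    (σ : (A ⊗[K] A) →ₗ[K] K)
    (hσ0 : ∀ x ∈ 𝒜 0, ∀ y ∈ 𝒜 0,
      σ (x ⊗ₜ[K] y) = Coalgebra.counit (R := K) x * Coalgebra.counit (R := K) y)
    (σi : ℕ → ((A ⊗[K] A) →ₗ[K] K))
    (hσi : ∀ i p q : ℕ, ∀ x ∈ 𝒜 p, ∀ y ∈ 𝒜 q,
      σi i (x ⊗ₜ[K] y) = if p + q = i then σ (x ⊗ₜ[K] y) else 0)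
    (s : ℕ) (hs : 0 < s) (hmin : ∀ i, 0 < i → i < s → σi i = 0)
    (p q r : ℕ) (hpqr : p + q + r = s)
    (da db dc : ℕ) (hda : da ≤ p) (hdb : db ≤ q) (hdc : dc ≤ r)
    (a1 : A) (ha1 : a1 ∈ 𝒜 da) (a2 : A) (ha2 : a2 ∈ 𝒜 (p - da))
    (b1 : A) (hb1 : b1 ∈ 𝒜 db) (b2 : A) (hb2 : b2 ∈ 𝒜 (q - db))
    (c1 : A) (hc1 : c1 ∈ 𝒜 dc) (c2 : A) (hc2 : c2 ∈ 𝒜 (r - dc)) :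
    σ (a1 ⊗ₜ[K] b1) * Coalgebra.counit (R := K) c1 * σ ((a2 * b2) ⊗ₜ[K] c2)
      = Coalgebra.counit (R := K) a1 * Coalgebra.counit (R := K) b1 *
          Coalgebra.counit (R := K) c1 * σ ((a2 * b2) ⊗ₜ[K] c2)
        + Coalgebra.counit (R := K) a2 * Coalgebra.counit (R := K) b2 *
            σi s (a1 ⊗ₜ[K] b1) *
            (Coalgebra.counit (R := K) c1 * Coalgebra.counit (R := K) c2) := by
  rcases Nat.eq_zero_or_pos dc with hdc0 | hdc0
  swap
  · rw [hcounit dc hdc0 c1 hc1]; ring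
  subst hdc0
  rcases Nat.lt_trichotomy (da + db) s with he | he | he
  · rcases Nat.eq_zero_or_pos (da + db) with he0 | he0
    · obtain ⟨hda0, hdb0⟩ := Nat.add_eq_zero.mp he0
      subst hda0; subst hdb0
      rw [hσ0 a1 ha1 b1 hb1]
      have h2 : σi s (a1 ⊗ₜ[K] b1) = 0 := by
        rw [hσi s 0 0 a1 ha1 b1 hb1, if_neg (by omega)]
      rw [h2]; ring
    · have hab : σ (a1 ⊗ₜ[K] b1) = 0 := by
        have h1 := hσi (da + db) da db a1 ha1 b1 hb1
        rw [if_pos rfl, hmin (da + db) he0 he] at h1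
        simpa using h1.symm
      have hbs : σi s (a1 ⊗ₜ[K] b1) = 0 := by
        rw [hσi s da db a1 ha1 b1 hb1, if_neg (by omega)]
      have hεab : Coalgebra.counit (R := K) a1 * Coalgebra.counit (R := K) b1 = 0 := by
        rcases Nat.lt_or_ge 0 da with h' | h'
        · rw [hcounit da h' a1 ha1]; ring
        · have hdb0 : 0 < db := by omega
          rw [hcounit db hdb0 b1 hb1]; ring
      linear_combination (Coalgebra.counit (R := K) c1 * σ ((a2 * b2) ⊗ₜ[K] c2)) * hab
        - (Coalgebra.counit (R := K) c1 * σ ((a2 * b2) ⊗ₜ[K] c2)) * hεab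
        - (Coalgebra.counit (R := K) a2 * Coalgebra.counit (R := K) b2 *
            Coalgebra.counit (R := K) c1 * Coalgebra.counit (R := K) c2) * hbs
  · -- da + db = s: forces r = 0, da = p, db = q
    have hr0 : r = 0 := by omega
    have hdap : da = p := by omega
    have hdbq : db = q := by omega
    have ha2' : a2 ∈ 𝒜 0 := by simpa [hdap] using ha2
    have hb2' : b2 ∈ 𝒜 0 := by simpa [hdbq] using hb2
    have hc2' : c2 ∈ 𝒜 0 := by simpa [hr0] using hc2
    have hab2 : a2 * b2 ∈ 𝒜 0 := by
      simpa using SetLike.mul_mem_graded ha2' hb2'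
    have h1 : σ ((a2 * b2) ⊗ₜ[K] c2) =
        Coalgebra.counit (R := K) a2 * Coalgebra.counit (R := K) b2 *
          Coalgebra.counit (R := K) c2 := by
      rw [hσ0 (a2 * b2) hab2 c2 hc2', Bialgebra.counit_mul]
    have h2 : σi s (a1 ⊗ₜ[K] b1) = σ (a1 ⊗ₜ[K] b1) := by
      rw [hσi s da db a1 ha1 b1 hb1, if_pos (by omega)]
    have hεab : Coalgebra.counit (R := K) a1 * Coalgebra.counit (R := K) b1 = 0 := by
      rcases Nat.lt_or_ge 0 p with h' | h'
      · rw [hcounit p h' a1 (hdap ▸ ha1)]; ring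
      · have hq0 : 0 < q := by omega
        rw [hcounit q hq0 b1 (hdbq ▸ hb1)]; ring
    linear_combination (Coalgebra.counit (R := K) c1 * σ (a1 ⊗ₜ[K] b1)) * h1
      - (Coalgebra.counit (R := K) a2 * Coalgebra.counit (R := K) b2 *
          Coalgebra.counit (R := K) c1 * Coalgebra.counit (R := K) c2) * h2
      - (Coalgebra.counit (R := K) c1 * σ ((a2 * b2) ⊗ₜ[K] c2)) * hεab
  · exfalso; omega

set_option synthInstance.maxHeartbeats 1000000 in
set_option maxHeartbeats 1000000 in
theorem evalLeft {K A : Type u} [Field K] [Ring A] [Bialgebra K A] (𝒜 : ℕ → Submodule K A)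
    [GradedAlgebra 𝒜]
    (hΔ : ∀ n, ∀ x ∈ 𝒜 n, Coalgebra.comul (R := K) x ∈
      ∑ p ∈ Finset.range (n + 1),
        LinearMap.range (TensorProduct.mapIncl (𝒜 p) (𝒜 (n - p))))
    (hcounit : ∀ n > 0, ∀ x ∈ 𝒜 n, Coalgebra.counit (R := K) x = 0)
    (σ : (A ⊗[K] A) →ₗ[K] K)
    (hσ0 : ∀ x ∈ 𝒜 0, ∀ y ∈ 𝒜 0,
      σ (x ⊗ₜ[K] y) = Coalgebra.counit (R := K) x * Coalgebra.counit (R := K) y)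
    (σi : ℕ → ((A ⊗[K] A) →ₗ[K] K))
    (hσi : ∀ i p q : ℕ, ∀ x ∈ 𝒜 p, ∀ y ∈ 𝒜 q,
      σi i (x ⊗ₜ[K] y) = if p + q = i then σ (x ⊗ₜ[K] y) else 0)
    (s : ℕ) (hs : 0 < s) (hmin : ∀ i, 0 < i → i < s → σi i = 0)
    (p q r : ℕ) (hpqr : p + q + r = s)
    (a : A) (ha : a ∈ 𝒜 p) (b : A) (hb : b ∈ 𝒜 q) (c : A) (hc : c ∈ 𝒜 r) :
    (LinearMap.mul' K K ∘ₗ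
        TensorProduct.map
          ((LinearMap.mul' K K) ∘ₗ
            TensorProduct.map (Coalgebra.counit (R := K) (A := A)) σ)
          (σ ∘ₗ TensorProduct.map (LinearMap.id (M := A)) (LinearMap.mul' K A)) ∘ₗ
        Coalgebra.comul) (a ⊗ₜ[K] (b ⊗ₜ[K] c))
      = σ (a ⊗ₜ[K] (b * c)) + Coalgebra.counit (R := K) a * σi s (b ⊗ₜ[K] c) := by
  classical
  set φ : (A ⊗[K] (A ⊗[K] A)) →ₗ[K] K :=
    (LinearMap.mul' K K) ∘ₗ TensorProduct.map (Coalgebra.counit (R := K) (A := A)) σ with hφ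
  set ψ : (A ⊗[K] (A ⊗[K] A)) →ₗ[K] K :=
    σ ∘ₗ TensorProduct.map (LinearMap.id (M := A)) (LinearMap.mul' K A) with hψ
  set F : ((A ⊗[K] A) ⊗[K] ((A ⊗[K] A) ⊗[K] (A ⊗[K] A))) →ₗ[K] K :=
    (LinearMap.mul' K K) ∘ₗ TensorProduct.map φ ψ ∘ₗ
      (TensorProduct.tensorTensorTensorComm K A A (A ⊗[K] A) (A ⊗[K] A)).toLinearMap ∘ₗ
      LinearMap.lTensor (A ⊗[K] A)
        (TensorProduct.tensorTensorTensorComm K A A A A).toLinearMap with hF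
  set G : ((A ⊗[K] A) ⊗[K] ((A ⊗[K] A) ⊗[K] (A ⊗[K] A))) →ₗ[K] K :=
    σ ∘ₗ TensorProduct.map (Ecl (K := K)) ((LinearMap.mul' K A) ∘ₗ
        TensorProduct.map (Ecl (K := K)) (Ecl (K := K)))
    + (LinearMap.mul' K K) ∘ₗ TensorProduct.map
        ((Coalgebra.counit (R := K)) ∘ₗ Ecl (K := K))
        ((σi s) ∘ₗ TensorProduct.map (Ecr (K := K)) (Ecr (K := K))) with hG
  have hFpure : ∀ a1 a2 b1 b2 c1 c2 : A,
      F ((a1 ⊗ₜ[K] a2) ⊗ₜ[K] ((b1 ⊗ₜ[K] b2) ⊗ₜ[K] (c1 ⊗ₜ[K] c2)))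
        = Coalgebra.counit (R := K) a1 * σ (b1 ⊗ₜ[K] c1) * σ (a2 ⊗ₜ[K] (b2 * c2)) := by
    intro a1 a2 b1 b2 c1 c2
    simp [hF, hφ, hψ, LinearMap.lTensor_tmul, TensorProduct.tensorTensorTensorComm_tmul,
      LinearMap.mul'_apply, mul_assoc]
  have hGpure : ∀ a1 a2 b1 b2 c1 c2 : A,
      G ((a1 ⊗ₜ[K] a2) ⊗ₜ[K] ((b1 ⊗ₜ[K] b2) ⊗ₜ[K] (c1 ⊗ₜ[K] c2)))
        = Coalgebra.counit (R := K) a1 * Coalgebra.counit (R := K) b1 *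
            Coalgebra.counit (R := K) c1 * σ (a2 ⊗ₜ[K] (b2 * c2))
          + Coalgebra.counit (R := K) a1 * Coalgebra.counit (R := K) a2 *
              (Coalgebra.counit (R := K) b2 * Coalgebra.counit (R := K) c2 *
                σi s (b1 ⊗ₜ[K] c1)) := by
    intro a1 a2 b1 b2 c1 c2
    simp [hG, LinearMap.mul'_apply, ← smul_tmul', tmul_smul, smul_smul,
      smul_mul', mul_smul_comm, smul_eq_mul]
    ring
  have hkey : F ((Coalgebra.comul (R := K) a) ⊗ₜ[K]
        ((Coalgebra.comul (R := K) b) ⊗ₜ[K] (Coalgebra.comul (R := K) c)))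
      = G ((Coalgebra.comul (R := K) a) ⊗ₜ[K]
        ((Coalgebra.comul (R := K) b) ⊗ₜ[K] (Coalgebra.comul (R := K) c))) := by
    refine mem_pieces_pred 𝒜 p _ (hΔ p a ha)
      (fun u => F (u ⊗ₜ[K] ((Coalgebra.comul (R := K) b) ⊗ₜ[K] (Coalgebra.comul (R := K) c)))
        = G (u ⊗ₜ[K] ((Coalgebra.comul (R := K) b) ⊗ₜ[K] (Coalgebra.comul (R := K) c))))
      (by simp only [zero_tmul, map_zero]) (fun u v hu hv => by simp only [add_tmul, map_add, hu, hv])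
      (fun k u hu => by simp only [← smul_tmul', map_smul, hu]) ?_
    intro dp hdp a1 ha1 a2 ha2
    refine mem_pieces_pred 𝒜 q _ (hΔ q b hb)
      (fun v => F ((a1 ⊗ₜ[K] a2) ⊗ₜ[K] (v ⊗ₜ[K] (Coalgebra.comul (R := K) c)))
        = G ((a1 ⊗ₜ[K] a2) ⊗ₜ[K] (v ⊗ₜ[K] (Coalgebra.comul (R := K) c))))
      (by simp only [zero_tmul, tmul_zero, map_zero]) (fun u v hu hv => by simp only [add_tmul, tmul_add, map_add, hu, hv])
      (fun k u hu => by simp only [← smul_tmul', tmul_smul, map_smul, hu]) ?_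
    intro dq hdq b1 hb1 b2 hb2
    refine mem_pieces_pred 𝒜 r _ (hΔ r c hc)
      (fun w => F ((a1 ⊗ₜ[K] a2) ⊗ₜ[K] ((b1 ⊗ₜ[K] b2) ⊗ₜ[K] w))
        = G ((a1 ⊗ₜ[K] a2) ⊗ₜ[K] ((b1 ⊗ₜ[K] b2) ⊗ₜ[K] w)))
      (by simp only [tmul_zero, map_zero]) (fun u v hu hv => by simp only [tmul_add, map_add, hu, hv])
      (fun k u hu => by simp only [tmul_smul, map_smul, hu]) ?_
    intro dr hdr c1 hc1 c2 hc2
    rw [hFpure, hGpure]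
    exact term_left 𝒜 hcounit σ hσ0 σi hσi s hs hmin p q r hpqr dp dq dr hdp hdq hdr
      a1 ha1 a2 ha2 b1 hb1 b2 hb2 c1 hc1 c2 hc2
  have h1 : Coalgebra.comul (R := K) (a ⊗ₜ[K] (b ⊗ₜ[K] c)) =
      (TensorProduct.tensorTensorTensorComm K A A (A ⊗[K] A) (A ⊗[K] A))
        ((Coalgebra.comul (R := K) a) ⊗ₜ[K]
          ((TensorProduct.tensorTensorTensorComm K A A A A)
            ((Coalgebra.comul (R := K) b) ⊗ₜ[K] (Coalgebra.comul (R := K) c)))) := rfl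
  have h2 : (LinearMap.mul' K K ∘ₗ TensorProduct.map φ ψ ∘ₗ Coalgebra.comul)
        (a ⊗ₜ[K] (b ⊗ₜ[K] c))
      = F ((Coalgebra.comul (R := K) a) ⊗ₜ[K]
          ((Coalgebra.comul (R := K) b) ⊗ₜ[K] (Coalgebra.comul (R := K) c))) := by
    simp only [hF, LinearMap.comp_apply, LinearMap.lTensor_tmul, h1,
      LinearEquiv.coe_coe]
  have h3 : G ((Coalgebra.comul (R := K) a) ⊗ₜ[K]
        ((Coalgebra.comul (R := K) b) ⊗ₜ[K] (Coalgebra.comul (R := K) c)))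
      = σ (a ⊗ₜ[K] (b * c)) + Coalgebra.counit (R := K) a * σi s (b ⊗ₜ[K] c) := by
    simp [hG, LinearMap.mul'_apply]
  rw [← hφ, ← hψ] at *
  rw [h2, hkey, h3]


set_option synthInstance.maxHeartbeats 1000000 in
set_option maxHeartbeats 1000000 in
theorem evalRight {K A : Type u} [Field K] [Ring A] [Bialgebra K A] (𝒜 : ℕ → Submodule K A)
    [GradedAlgebra 𝒜]
    (hΔ : ∀ n, ∀ x ∈ 𝒜 n, Coalgebra.comul (R := K) x ∈
      ∑ p ∈ Finset.range (n + 1),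
        LinearMap.range (TensorProduct.mapIncl (𝒜 p) (𝒜 (n - p))))
    (hcounit : ∀ n > 0, ∀ x ∈ 𝒜 n, Coalgebra.counit (R := K) x = 0)
    (σ : (A ⊗[K] A) →ₗ[K] K)
    (hσ0 : ∀ x ∈ 𝒜 0, ∀ y ∈ 𝒜 0,
      σ (x ⊗ₜ[K] y) = Coalgebra.counit (R := K) x * Coalgebra.counit (R := K) y)
    (σi : ℕ → ((A ⊗[K] A) →ₗ[K] K))
    (hσi : ∀ i p q : ℕ, ∀ x ∈ 𝒜 p, ∀ y ∈ 𝒜 q,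
      σi i (x ⊗ₜ[K] y) = if p + q = i then σ (x ⊗ₜ[K] y) else 0)
    (s : ℕ) (hs : 0 < s) (hmin : ∀ i, 0 < i → i < s → σi i = 0)
    (p q r : ℕ) (hpqr : p + q + r = s)
    (a : A) (ha : a ∈ 𝒜 p) (b : A) (hb : b ∈ 𝒜 q) (c : A) (hc : c ∈ 𝒜 r) :
    (LinearMap.mul' K K ∘ₗ
        TensorProduct.map
          (((LinearMap.mul' K K) ∘ₗ
              TensorProduct.map σ (Coalgebra.counit (R := K) (A := A))) ∘ₗ
            (TensorProduct.assoc K A A A).symm.toLinearMap)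
          ((σ ∘ₗ TensorProduct.map (LinearMap.mul' K A) (LinearMap.id (M := A))) ∘ₗ
            (TensorProduct.assoc K A A A).symm.toLinearMap) ∘ₗ
        Coalgebra.comul) (a ⊗ₜ[K] (b ⊗ₜ[K] c))
      = σ ((a * b) ⊗ₜ[K] c) + σi s (a ⊗ₜ[K] b) * Coalgebra.counit (R := K) c := by
  classical
  set φ : (A ⊗[K] (A ⊗[K] A)) →ₗ[K] K :=
    ((LinearMap.mul' K K) ∘ₗ
        TensorProduct.map σ (Coalgebra.counit (R := K) (A := A))) ∘ₗ
      (TensorProduct.assoc K A A A).symm.toLinearMap with hφ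
  set ψ : (A ⊗[K] (A ⊗[K] A)) →ₗ[K] K :=
    (σ ∘ₗ TensorProduct.map (LinearMap.mul' K A) (LinearMap.id (M := A))) ∘ₗ
      (TensorProduct.assoc K A A A).symm.toLinearMap with hψ
  set F : ((A ⊗[K] A) ⊗[K] ((A ⊗[K] A) ⊗[K] (A ⊗[K] A))) →ₗ[K] K :=
    (LinearMap.mul' K K) ∘ₗ TensorProduct.map φ ψ ∘ₗ
      (TensorProduct.tensorTensorTensorComm K A A (A ⊗[K] A) (A ⊗[K] A)).toLinearMap ∘ₗ
      LinearMap.lTensor (A ⊗[K] A)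
        (TensorProduct.tensorTensorTensorComm K A A A A).toLinearMap with hF
  set G : ((A ⊗[K] A) ⊗[K] ((A ⊗[K] A) ⊗[K] (A ⊗[K] A))) →ₗ[K] K :=
    (σ ∘ₗ TensorProduct.map ((LinearMap.mul' K A) ∘ₗ
          TensorProduct.map (Ecl (K := K)) (Ecl (K := K))) (Ecl (K := K))) ∘ₗ
        (TensorProduct.assoc K (A ⊗[K] A) (A ⊗[K] A) (A ⊗[K] A)).symm.toLinearMap
    + ((LinearMap.mul' K K) ∘ₗ TensorProduct.map
          ((σi s) ∘ₗ TensorProduct.map (Ecr (K := K)) (Ecr (K := K)))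
          ((Coalgebra.counit (R := K)) ∘ₗ Ecl (K := K))) ∘ₗ
        (TensorProduct.assoc K (A ⊗[K] A) (A ⊗[K] A) (A ⊗[K] A)).symm.toLinearMap with hG
  have hFpure : ∀ a1 a2 b1 b2 c1 c2 : A,
      F ((a1 ⊗ₜ[K] a2) ⊗ₜ[K] ((b1 ⊗ₜ[K] b2) ⊗ₜ[K] (c1 ⊗ₜ[K] c2)))
        = σ (a1 ⊗ₜ[K] b1) * Coalgebra.counit (R := K) c1 * σ ((a2 * b2) ⊗ₜ[K] c2) := by
    intro a1 a2 b1 b2 c1 c2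
    simp [hF, hφ, hψ, LinearMap.lTensor_tmul, TensorProduct.tensorTensorTensorComm_tmul,
      TensorProduct.assoc_symm_tmul, LinearMap.mul'_apply, mul_assoc]
  have hGpure : ∀ a1 a2 b1 b2 c1 c2 : A,
      G ((a1 ⊗ₜ[K] a2) ⊗ₜ[K] ((b1 ⊗ₜ[K] b2) ⊗ₜ[K] (c1 ⊗ₜ[K] c2)))
        = Coalgebra.counit (R := K) a1 * Coalgebra.counit (R := K) b1 *
            Coalgebra.counit (R := K) c1 * σ ((a2 * b2) ⊗ₜ[K] c2)
          + Coalgebra.counit (R := K) a2 * Coalgebra.counit (R := K) b2 *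
              σi s (a1 ⊗ₜ[K] b1) *
              (Coalgebra.counit (R := K) c1 * Coalgebra.counit (R := K) c2) := by
    intro a1 a2 b1 b2 c1 c2
    simp [hG, TensorProduct.assoc_symm_tmul, LinearMap.mul'_apply, ← smul_tmul',
      tmul_smul, smul_smul, smul_mul', mul_smul_comm, smul_eq_mul]
    ring
  have hkey : F ((Coalgebra.comul (R := K) a) ⊗ₜ[K]
        ((Coalgebra.comul (R := K) b) ⊗ₜ[K] (Coalgebra.comul (R := K) c)))
      = G ((Coalgebra.comul (R := K) a) ⊗ₜ[K]
        ((Coalgebra.comul (R := K) b) ⊗ₜ[K] (Coalgebra.comul (R := K) c))) := by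
    refine mem_pieces_pred 𝒜 p _ (hΔ p a ha)
      (fun u => F (u ⊗ₜ[K] ((Coalgebra.comul (R := K) b) ⊗ₜ[K] (Coalgebra.comul (R := K) c)))
        = G (u ⊗ₜ[K] ((Coalgebra.comul (R := K) b) ⊗ₜ[K] (Coalgebra.comul (R := K) c))))
      (by simp only [zero_tmul, map_zero])
      (fun u v hu hv => by simp only [add_tmul, map_add, hu, hv])
      (fun k u hu => by simp only [← smul_tmul', map_smul, hu]) ?_
    intro dp hdp a1 ha1 a2 ha2
    refine mem_pieces_pred 𝒜 q _ (hΔ q b hb)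
      (fun v => F ((a1 ⊗ₜ[K] a2) ⊗ₜ[K] (v ⊗ₜ[K] (Coalgebra.comul (R := K) c)))
        = G ((a1 ⊗ₜ[K] a2) ⊗ₜ[K] (v ⊗ₜ[K] (Coalgebra.comul (R := K) c))))
      (by simp only [zero_tmul, tmul_zero, map_zero])
      (fun u v hu hv => by simp only [add_tmul, tmul_add, map_add, hu, hv])
      (fun k u hu => by simp only [← smul_tmul', tmul_smul, map_smul, hu]) ?_
    intro dq hdq b1 hb1 b2 hb2
    refine mem_pieces_pred 𝒜 r _ (hΔ r c hc)
      (fun w => F ((a1 ⊗ₜ[K] a2) ⊗ₜ[K] ((b1 ⊗ₜ[K] b2) ⊗ₜ[K] w))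
        = G ((a1 ⊗ₜ[K] a2) ⊗ₜ[K] ((b1 ⊗ₜ[K] b2) ⊗ₜ[K] w)))
      (by simp only [tmul_zero, map_zero])
      (fun u v hu hv => by simp only [tmul_add, map_add, hu, hv])
      (fun k u hu => by simp only [tmul_smul, map_smul, hu]) ?_
    intro dr hdr c1 hc1 c2 hc2
    rw [hFpure, hGpure]
    exact term_right 𝒜 hcounit σ hσ0 σi hσi s hs hmin p q r hpqr dp dq dr hdp hdq hdr
      a1 ha1 a2 ha2 b1 hb1 b2 hb2 c1 hc1 c2 hc2
  have h1 : Coalgebra.comul (R := K) (a ⊗ₜ[K] (b ⊗ₜ[K] c)) =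
      (TensorProduct.tensorTensorTensorComm K A A (A ⊗[K] A) (A ⊗[K] A))
        ((Coalgebra.comul (R := K) a) ⊗ₜ[K]
          ((TensorProduct.tensorTensorTensorComm K A A A A)
            ((Coalgebra.comul (R := K) b) ⊗ₜ[K] (Coalgebra.comul (R := K) c)))) := rfl
  have h2 : (LinearMap.mul' K K ∘ₗ TensorProduct.map φ ψ ∘ₗ Coalgebra.comul)
        (a ⊗ₜ[K] (b ⊗ₜ[K] c))
      = F ((Coalgebra.comul (R := K) a) ⊗ₜ[K]
          ((Coalgebra.comul (R := K) b) ⊗ₜ[K] (Coalgebra.comul (R := K) c))) := by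
    simp only [hF, LinearMap.comp_apply, LinearMap.lTensor_tmul, h1,
      LinearEquiv.coe_coe]
  have h3 : G ((Coalgebra.comul (R := K) a) ⊗ₜ[K]
        ((Coalgebra.comul (R := K) b) ⊗ₜ[K] (Coalgebra.comul (R := K) c)))
      = σ ((a * b) ⊗ₜ[K] c) + σi s (a ⊗ₜ[K] b) * Coalgebra.counit (R := K) c := by
    simp [hG, TensorProduct.assoc_symm_tmul, LinearMap.mul'_apply]
  rw [← hφ, ← hψ] at *
  rw [h2, hkey, h3]


set_option maxHeartbeats 1000000 in
theorem graded_infinitesimal_is_hochschild_cocycle (K A : Type u) [Field K] [Ring A]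
    [Bialgebra K A] (𝒜 : ℕ → Submodule K A) [GradedAlgebra 𝒜]
    (hΔ : ∀ n, ∀ x ∈ 𝒜 n, Coalgebra.comul (R := K) x ∈
      ∑ p ∈ Finset.range (n + 1),
        LinearMap.range (TensorProduct.mapIncl (𝒜 p) (𝒜 (n - p))))
    (hcounit : ∀ n > 0, ∀ x ∈ 𝒜 n, Coalgebra.counit (R := K) x = 0)
    (σ : (A ⊗[K] A) →ₗ[K] K)
    (hσ0 : ∀ x ∈ 𝒜 0, ∀ y ∈ 𝒜 0,
      σ (x ⊗ₜ[K] y) = Coalgebra.counit (R := K) x * Coalgebra.counit (R := K) y)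
    (hinv : ∃ τ : (A ⊗[K] A) →ₗ[K] K,
      convProd K σ τ = Coalgebra.counit ∧ convProd K τ σ = Coalgebra.counit)
    (hnorm : ∀ a : A, σ (a ⊗ₜ[K] 1) = Coalgebra.counit (R := K) a ∧
      σ ((1 : A) ⊗ₜ[K] a) = Coalgebra.counit (R := K) a)
    (hcoc :
      convProd K
        ((LinearMap.mul' K K) ∘ₗ TensorProduct.map (Coalgebra.counit (R := K) (A := A)) σ)
        (σ ∘ₗ TensorProduct.map (LinearMap.id (M := A)) (LinearMap.mul' K A))
      = convProd K
        (((LinearMap.mul' K K) ∘ₗ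
            TensorProduct.map σ (Coalgebra.counit (R := K) (A := A))) ∘ₗ
          (TensorProduct.assoc K A A A).symm.toLinearMap)
        ((σ ∘ₗ TensorProduct.map (LinearMap.mul' K A) (LinearMap.id (M := A))) ∘ₗ
          (TensorProduct.assoc K A A A).symm.toLinearMap))
    (σi : ℕ → ((A ⊗[K] A) →ₗ[K] K))
    (hσi : ∀ i p q : ℕ, ∀ x ∈ 𝒜 p, ∀ y ∈ 𝒜 q,
      σi i (x ⊗ₜ[K] y) = if p + q = i then σ (x ⊗ₜ[K] y) else 0)
    (s : ℕ) (hs : 0 < s) (hss : σi s ≠ 0) (hmin : ∀ i, 0 < i → i < s → σi i = 0) :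
    ∀ a b c : A,
      Coalgebra.counit (R := K) a * σi s (b ⊗ₜ[K] c) + σi s (a ⊗ₜ[K] (b * c))
        = σi s (a ⊗ₜ[K] b) * Coalgebra.counit (R := K) c + σi s ((a * b) ⊗ₜ[K] c) := by
  classical
  have htop : ∀ x : A, x ∈ ⨆ i, 𝒜 i := fun x => by
    rw [(DirectSum.Decomposition.isInternal 𝒜).submodule_iSup_eq_top]; trivial
  -- homogeneous case
  have hhom : ∀ (p q r : ℕ) (a : A), a ∈ 𝒜 p → ∀ b, b ∈ 𝒜 q → ∀ c, c ∈ 𝒜 r →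
      Coalgebra.counit (R := K) a * σi s (b ⊗ₜ[K] c) + σi s (a ⊗ₜ[K] (b * c))
        = σi s (a ⊗ₜ[K] b) * Coalgebra.counit (R := K) c + σi s ((a * b) ⊗ₜ[K] c) := by
    intro p q r a ha b hb c hc
    by_cases hpqr : p + q + r = s
    · have hL := evalLeft 𝒜 hΔ hcounit σ hσ0 σi hσi s hs hmin p q r hpqr a ha b hb c hc
      have hR := evalRight 𝒜 hΔ hcounit σ hσ0 σi hσi s hs hmin p q r hpqr a ha b hb c hc
      have hc' := LinearMap.congr_fun hcoc (a ⊗ₜ[K] (b ⊗ₜ[K] c))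
      simp only [convProd] at hc'
      rw [hL, hR] at hc'
      have e1 := hσi s p (q + r) a ha (b * c) (SetLike.mul_mem_graded hb hc)
      rw [if_pos (by omega)] at e1
      have e2 := hσi s (p + q) r (a * b) (SetLike.mul_mem_graded ha hb) c hc
      rw [if_pos (by omega)] at e2
      linear_combination hc' + e1 - e2
    · have h1 : σi s (a ⊗ₜ[K] (b * c)) = 0 := by
        rw [hσi s p (q + r) a ha (b * c) (SetLike.mul_mem_graded hb hc),
          if_neg (by omega)]
      have h2 : σi s ((a * b) ⊗ₜ[K] c) = 0 := by
        rw [hσi s (p + q) r (a * b) (SetLike.mul_mem_graded ha hb) c hc,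
          if_neg (by omega)]
      have h3 : Coalgebra.counit (R := K) a * σi s (b ⊗ₜ[K] c) = 0 := by
        by_cases hqr : q + r = s
        · have hp : 0 < p := by omega
          rw [hcounit p hp a ha]; ring
        · rw [hσi s q r b hb c hc, if_neg (by omega)]; ring
      have h4 : σi s (a ⊗ₜ[K] b) * Coalgebra.counit (R := K) c = 0 := by
        by_cases hpq : p + q = s
        · have hr : 0 < r := by omega
          rw [hcounit r (by omega) c hc]; ring
        · rw [hσi s p q a ha b hb, if_neg (by omega)]; ring
      rw [h1, h2, h3, h4]
  intro a b c
  revert b c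
  refine Submodule.iSup_induction 𝒜 (motive := fun a => ∀ b c : A,
      Coalgebra.counit (R := K) a * σi s (b ⊗ₜ[K] c) + σi s (a ⊗ₜ[K] (b * c))
        = σi s (a ⊗ₜ[K] b) * Coalgebra.counit (R := K) c + σi s ((a * b) ⊗ₜ[K] c))
    (htop a) (fun p a ha => ?_) ?_ ?_
  · intro b c
    revert c
    refine Submodule.iSup_induction 𝒜 (motive := fun b => ∀ c : A,
        Coalgebra.counit (R := K) a * σi s (b ⊗ₜ[K] c) + σi s (a ⊗ₜ[K] (b * c))
          = σi s (a ⊗ₜ[K] b) * Coalgebra.counit (R := K) c + σi s ((a * b) ⊗ₜ[K] c))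
      (htop b) (fun q b hb => ?_) ?_ ?_
    · intro c
      refine Submodule.iSup_induction 𝒜 (motive := fun c =>
          Coalgebra.counit (R := K) a * σi s (b ⊗ₜ[K] c) + σi s (a ⊗ₜ[K] (b * c))
            = σi s (a ⊗ₜ[K] b) * Coalgebra.counit (R := K) c + σi s ((a * b) ⊗ₜ[K] c))
        (htop c) (fun r c hc => ?_) ?_ ?_
      · exact hhom p q r a ha b hb c hc
      · simp
      · intro x y hx hy
        simp only [tmul_add, mul_add, map_add]
        linear_combination hx + hy
    · intro c
      simp
    · intro x y hx hy c
      simp only [add_tmul, tmul_add, mul_add, add_mul, map_add]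
      linear_combination hx c + hy c
  · intro b c
    simp
  · intro x y hx hy b c
    simp only [add_tmul, add_mul, map_add]
    linear_combination hx b c + hy b c
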